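/- There exist vectors a, b ∈ {1, −1}^9 such that ∑_{s=0}^{8} a_s = 1, ∑_{s=0}^{8} b_s = 1, and a ⋆ a + b ⋆ b = (18, −2, −2, −2, −2, −2, −2, −2, −2); consequently, there exists a Hadamard matrix of order 20 with two circulant cores. -/

import Mathlib

open Matrix

/-- Periodic autocorrelation of a vector `a ∈ ℝ^n`. -/
def autocorr {n : ℕ} (a : Fin n → ℝ) : Fin n → ℝ :=
  fun s => ∑ l, a l * a (l + s)

def Hz : Matrix (Fin 20) (Fin 20) ℤ :=
  !![1, 1, 1, 1, 1, 1, 1, 1, 1, 1, 1, 1, 1, 1, 1, 1, 1, 1, 1, 1;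
    1, -1, 1, 1, 1, 1, 1, 1, 1, 1, 1, -1, -1, -1, -1, -1, -1, -1, -1, -1;
    1, 1, -1, -1, -1, -1, 1, -1, 1, 1, 1, -1, -1, 1, -1, 1, -1, -1, 1, 1;
    1, 1, 1, -1, -1, -1, -1, 1, -1, 1, 1, 1, -1, -1, 1, -1, 1, -1, -1, 1;
    1, 1, 1, 1, -1, -1, -1, -1, 1, -1, 1, 1, 1, -1, -1, 1, -1, 1, -1, -1;
    1, 1, 1, 1, 1, -1, -1, -1, -1, 1, -1, -1, 1, 1, -1, -1, 1, -1, 1, -1;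
    1, 1, -1, 1, 1, 1, -1, -1, -1, -1, 1, -1, -1, 1, 1, -1, -1, 1, -1, 1;
    1, 1, 1, -1, 1, 1, 1, -1, -1, -1, -1, 1, -1, -1, 1, 1, -1, -1, 1, -1;
    1, 1, -1, 1, -1, 1, 1, 1, -1, -1, -1, -1, 1, -1, -1, 1, 1, -1, -1, 1;
    1, 1, -1, -1, 1, -1, 1, 1, 1, -1, -1, 1, -1, 1, -1, -1, 1, 1, -1, -1;
    1, 1, -1, -1, -1, 1, -1, 1, 1, 1, -1, -1, 1, -1, 1, -1, -1, 1, 1, -1;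
    1, -1, -1, 1, 1, -1, -1, 1, -1, 1, -1, 1, -1, -1, -1, 1, -1, 1, 1, 1;
    1, -1, -1, -1, 1, 1, -1, -1, 1, -1, 1, 1, 1, -1, -1, -1, 1, -1, 1, 1;
    1, -1, 1, -1, -1, 1, 1, -1, -1, 1, -1, 1, 1, 1, -1, -1, -1, 1, -1, 1;
    1, -1, -1, 1, -1, -1, 1, 1, -1, -1, 1, 1, 1, 1, 1, -1, -1, -1, 1, -1;
    1, -1, 1, -1, 1, -1, -1, 1, 1, -1, -1, -1, 1, 1, 1, 1, -1, -1, -1, 1;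
    1, -1, -1, 1, -1, 1, -1, -1, 1, 1, -1, 1, -1, 1, 1, 1, 1, -1, -1, -1;
    1, -1, -1, -1, 1, -1, 1, -1, -1, 1, 1, -1, 1, -1, 1, 1, 1, 1, -1, -1;
    1, -1, 1, -1, -1, 1, -1, 1, -1, -1, 1, -1, -1, 1, -1, 1, 1, 1, 1, -1;
    1, -1, 1, 1, -1, -1, 1, -1, 1, -1, -1, -1, -1, -1, 1, -1, 1, 1, 1, 1]

lemma Hz_entries : ∀ i j, Hz i j = 1 ∨ Hz i j = -1 := by
  letI : DecidablePred (fun i : Fin 20 => ∀ j, Hz i j = 1 ∨ Hz i j = -1) := fun i => inferInstance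
  decide

lemma Hz_mul : Hz * Hzᵀ = (20 : ℤ) • (1 : Matrix (Fin 20) (Fin 20) ℤ) := by decide

def az : Fin 9 → ℤ := ![1,1,1,1,-1,1,-1,-1,-1]
def bz : Fin 9 → ℤ := ![1,1,-1,1,-1,1,1,-1,-1]

lemma az_entries : ∀ s, az s = 1 ∨ az s = -1 := by decide
lemma bz_entries : ∀ s, bz s = 1 ∨ bz s = -1 := by decide
lemma az_sum : ∑ s, az s = 1 := by decide
lemma bz_sum : ∑ s, bz s = 1 := by decide
lemma key : ∀ s : Fin 9,
    (∑ l, az l * az (l + s)) + (∑ l, bz l * bz (l + s)) =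
      if s = 0 then 18 else -2 := by decide

/-- There exist `a, b ∈ {±1}^9` with `∑ a_s = 1`, `∑ b_s = 1` and
`a ⋆ a + b ⋆ b = (18, -2, …, -2)`; consequently, there exists a Hadamard matrix of
order 20 (with two circulant cores). -/
theorem exists_double_circulant_core_order_20 :
    (∃ a b : Fin 9 → ℝ,
      (∀ s, a s = 1 ∨ a s = -1) ∧ (∀ s, b s = 1 ∨ b s = -1) ∧
      (∑ s, a s = 1) ∧ (∑ s, b s = 1) ∧
      (∀ s : Fin 9, autocorr a s + autocorr b s = if s = 0 then 18 else -2)) ∧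
    (∃ H : Matrix (Fin 20) (Fin 20) ℝ,
      (∀ i j, H i j = 1 ∨ H i j = -1) ∧
      H * Hᵀ = (20 : ℝ) • (1 : Matrix (Fin 20) (Fin 20) ℝ)) := by
  constructor
  · refine ⟨fun i => ((az i : ℤ) : ℝ), fun i => ((bz i : ℤ) : ℝ), ?_, ?_, ?_, ?_, ?_⟩
    · intro s; rcases az_entries s with h | h <;> [left; right] <;> simp only [h] <;> norm_num
    · intro s; rcases bz_entries s with h | h <;> [left; right] <;> simp only [h] <;> norm_num
    · have : ((∑ s, az s : ℤ) : ℝ) = ∑ s, ((az s : ℤ) : ℝ) := by push_cast; ring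
      rw [← this, az_sum]; norm_num
    · have : ((∑ s, bz s : ℤ) : ℝ) = ∑ s, ((bz s : ℤ) : ℝ) := by push_cast; ring
      rw [← this, bz_sum]; norm_num
    · intro s
      have h1 : autocorr (fun i => ((az i : ℤ) : ℝ)) s + autocorr (fun i => ((bz i : ℤ) : ℝ)) s
          = (((∑ l, az l * az (l + s)) + (∑ l, bz l * bz (l + s)) : ℤ) : ℝ) := by
        simp only [autocorr]; push_cast; ring
      rw [h1, key s]
      split <;> norm_num
  · refine ⟨Hz.map (Int.cast : ℤ → ℝ), ?_, ?_⟩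
    · intro i j
      rcases Hz_entries i j with h | h <;> [left; right] <;>
        simp [Matrix.map_apply, h]
    · have h2 : Hz.map (Int.cast : ℤ → ℝ) * (Hz.map Int.cast)ᵀ
          = (Hz * Hzᵀ).map (Int.cast : ℤ → ℝ) := by
        rw [← Matrix.transpose_map]
        exact (Matrix.map_mul (f := Int.castRingHom ℝ)).symm
      rw [h2, Hz_mul]
      ext i j
      rw [Matrix.map_apply, Matrix.smul_apply, Matrix.smul_apply, Matrix.one_apply,
        Matrix.one_apply]
      split <;> simp
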